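/- For any odd positive integers w1, w2, w3, any complex number y1, and any nonnegative integer n: (w1 w2)^n Σ_{a=0}^{w1 d − 1} Σ_{b=0}^{w2 d − 1} (−1)^{a+b} χ(a) χ(b) E_{n,χ}(w3 y1 + (w3/w1) a + (w3/w2) b) = (w2 w3)^n Σ_{a=0}^{w2 d − 1} Σ_{b=0}^{w3 d − 1} (−1)^{a+b} χ(a) χ(b) E_{n,χ}(w1 y1 + (w1/w2) a + (w1/w3) b) = (w3 w1)^n Σ_{a=0}^{w3 d − 1} Σ_{b=0}^{w1 d − 1} (−1)^{a+b} χ(a) χ(b) E_{n,χ}(w2 y1 + (w2/w3) a + (w2/w1) b). -/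

import Mathlib

open Finset

/-- The formal exponential power series `e^{ct} = Σ cⁿ tⁿ/n!` in `ℂ[[t]]`. -/
noncomputable def expPS (c : ℂ) : PowerSeries ℂ :=
  PowerSeries.mk fun n => c ^ n / n.factorial

/-- `Σ_{a=0}^{d-1} (-1)^a χ(a) e^{at}` as a formal power series. -/
noncomputable def altSum (χ : ℤ → ℂ) (d : ℕ) : PowerSeries ℂ :=
  ∑ a ∈ Finset.range d, ((-1 : ℂ) ^ a * χ (a : ℤ)) • expPS (a : ℂ)

/-- `E` is the family of generalized Euler polynomials attached to `χ` mod `d`: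
`(Σ_{n≥0} E_{n,χ}(x) tⁿ/n!) · (e^{dt}+1) = 2 e^{xt} · Σ_{a=0}^{d-1} (-1)^a χ(a) e^{at}`. -/
def IsGenEuler (d : ℕ) (χ : ℤ → ℂ) (E : ℕ → ℂ → ℂ) : Prop :=
  ∀ x : ℂ, (PowerSeries.mk fun n => E n x / n.factorial) * (expPS (d : ℂ) + 1)
    = (2 : PowerSeries ℂ) * expPS x * altSum χ d

/-- The alternating generalized power sum `T_k(n,χ) = Σ_{a=0}^{n} (-1)^a χ(a) a^k`
(with the convention `0^0 = 1`). -/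
noncomputable def altPowSum (χ : ℤ → ℂ) (k n : ℕ) : ℂ :=
  ∑ a ∈ Finset.range (n + 1), (-1 : ℂ) ^ a * χ (a : ℤ) * (a : ℂ) ^ k

/-- The multinomial coefficient `(k+l+m)! / (k! l! m!)`. -/
def multinom (k l m : ℕ) : ℕ :=
  (k + l + m).factorial / (k.factorial * l.factorial * m.factorial)

section Aux
open PowerSeries

lemma expPS_eq (c : ℂ) : expPS c = rescale c (PowerSeries.exp ℂ) := by
  ext n
  simp [expPS, coeff_rescale, coeff_exp, div_eq_mul_inv]

lemma expPS_add (a b : ℂ) : expPS (a + b) = expPS a * expPS b := by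
  rw [expPS_eq, expPS_eq, expPS_eq, exp_mul_exp_eq_exp_add]

lemma rescale_expPS (c b : ℂ) : rescale c (expPS b) = expPS (c * b) := by
  rw [expPS_eq, expPS_eq, rescale_rescale, mul_comm]

lemma constCoeff_expPS (c : ℂ) : PowerSeries.constantCoeff (R := ℂ) (expPS c) = 1 := by
  simp [expPS_eq, rescale, constantCoeff_exp]

lemma expPS_zero : expPS 0 = 1 := by
  ext n; cases n <;> simp [expPS, PowerSeries.coeff_one]

lemma expPS_pow (c : ℂ) (m : ℕ) : expPS c ^ m = expPS (m * c) := by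
  induction m with
  | zero => simp [expPS_zero]
  | succ m ih => rw [pow_succ, ih, ← expPS_add]; push_cast; ring_nf

lemma chi_period (d : ℕ) (χ : ℤ → ℂ) (hper : ∀ a : ℤ, χ (a + d) = χ a)
    (j r : ℕ) : χ ((j * d + r : ℕ) : ℤ) = χ r := by
  induction j with
  | zero => simp
  | succ j ih =>
    have : (((j+1) * d + r : ℕ) : ℤ) = ((j * d + r : ℕ) : ℤ) + d := by push_cast; ring
    rw [this, hper, ih]

lemma rescale_C' (c k : ℂ) : rescale c (PowerSeries.C (R := ℂ) k) = PowerSeries.C (R := ℂ) k := by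
  ext n
  by_cases h : n = 0 <;> simp [coeff_rescale, PowerSeries.coeff_C, h]

lemma rescale_altSum (χ : ℤ → ℂ) (d : ℕ) (c : ℂ) :
    rescale c (altSum χ d) = ∑ r ∈ Finset.range d, ((-1 : ℂ) ^ r * χ (r : ℤ)) • expPS (c * r) := by
  rw [altSum, map_sum]
  refine Finset.sum_congr rfl fun r _ => ?_
  rw [smul_eq_C_mul, smul_eq_C_mul, map_mul, rescale_C', rescale_expPS]

lemma sumP (d : ℕ) (hd : Odd d) (χ : ℤ → ℂ) (hper : ∀ a : ℤ, χ (a + d) = χ a)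
    (m : ℕ) (c : ℂ) :
    ∑ a ∈ range (m * d), ((-1 : ℂ) ^ a * χ (a : ℤ)) • expPS (c * a)
    = (∑ j ∈ range m, ((-1 : ℂ) ^ j) • expPS ((c * d) * j)) * rescale c (altSum χ d) := by
  induction m with
  | zero => simp
  | succ m ih =>
    rw [Nat.succ_mul, Finset.sum_range_add, ih, Finset.sum_range_succ, add_mul, smul_mul_assoc]
    congr 1
    rw [rescale_altSum, Finset.mul_sum, Finset.smul_sum]
    refine Finset.sum_congr rfl fun r hr => ?_
    have h1 : χ ((m * d + r : ℕ) : ℤ) = χ r := chi_period d χ hper m r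
    have h2 : ((-1 : ℂ)) ^ (m * d + r) = (-1) ^ m * (-1) ^ r := by
      rw [pow_add, mul_comm m d, pow_mul, Odd.neg_one_pow hd]
    have h3 : expPS (c * ((m * d + r : ℕ) : ℂ)) = expPS ((c * d) * m) * expPS (c * r) := by
      rw [← expPS_add]; push_cast; ring_nf
    rw [h1, h2, h3]
    simp only [smul_eq_C_mul, map_mul, map_pow, map_neg, map_one]
    ring

lemma geomP (m : ℕ) (hm : Odd m) (s : ℂ) :
    (∑ j ∈ range m, ((-1 : ℂ) ^ j) • expPS (s * j)) * (expPS s + 1) = expPS (m * s) + 1 := by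
  have key : ∀ j ∈ range m, ((-1 : ℂ) ^ j) • expPS (s * j) = (-expPS s) ^ j := by
    intro j _
    conv_rhs => rw [neg_pow]
    rw [expPS_pow, smul_eq_C_mul, map_pow, map_neg, map_one, mul_comm (j:ℂ) s]
  rw [Finset.sum_congr rfl key]
  have := geom_sum_mul (-expPS s) m
  have h2 : (∑ j ∈ range m, (-expPS s) ^ j) * (expPS s + 1)
      = -((∑ j ∈ range m, (-expPS s) ^ j) * (-expPS s - 1)) := by ring
  rw [h2, this, Odd.neg_pow hm, expPS_pow]
  ring

lemma Pmul (d : ℕ) (hd : Odd d) (χ : ℤ → ℂ) (hper : ∀ a : ℤ, χ (a + d) = χ a)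
    (m : ℕ) (hm : Odd m) (c : ℂ) :
    (∑ a ∈ range (m * d), ((-1 : ℂ) ^ a * χ (a : ℤ)) • expPS (c * a)) * (expPS (c * d) + 1)
    = rescale c (altSum χ d) * (expPS ((m : ℂ) * (c * d)) + 1) := by
  rw [sumP d hd χ hper m c, mul_right_comm, geomP m hm (c * d), mul_comm]

lemma resc_hE {d : ℕ} {χ : ℤ → ℂ} {E : ℕ → ℂ → ℂ} (hE : IsGenEuler d χ E) (c x : ℂ) :
    (PowerSeries.mk fun n => c ^ n * (E n x / n.factorial)) * (expPS (c * d) + 1)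
      = 2 * expPS (c * x) * rescale c (altSum χ d) := by
  have h := congrArg (rescale c) (hE x)
  simp only [map_mul, map_add, map_one, map_ofNat, rescale_mk, rescale_expPS] at h
  exact h

noncomputable def Dsum (d : ℕ) (χ : ℤ → ℂ) (E : ℕ → ℂ → ℂ) (u v w : ℕ) (y : ℂ) (n : ℕ) : ℂ :=
  ((u : ℂ) * v) ^ n * ∑ a ∈ range (u * d), ∑ b ∈ range (v * d),
    (-1 : ℂ) ^ (a + b) * χ (a : ℤ) * χ (b : ℤ) *
      E n ((w : ℂ) * y + (w : ℂ) / (u : ℂ) * (a : ℂ) + (w : ℂ) / (v : ℂ) * (b : ℂ))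

lemma step1 (d : ℕ) (χ : ℤ → ℂ) (E : ℕ → ℂ → ℂ) (u v w : ℕ) (y : ℂ) :
    (PowerSeries.mk fun n => Dsum d χ E u v w y n / n.factorial)
    = ∑ a ∈ range (u * d), ∑ b ∈ range (v * d),
        ((-1 : ℂ) ^ (a + b) * χ (a : ℤ) * χ (b : ℤ)) •
          (PowerSeries.mk fun n => ((u : ℂ) * v) ^ n *
            (E n ((w : ℂ) * y + (w : ℂ) / (u : ℂ) * (a : ℂ) + (w : ℂ) / (v : ℂ) * (b : ℂ))
              / n.factorial)) := by
  ext n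
  simp only [map_sum, map_smul, coeff_mk, smul_eq_mul, Dsum]
  rw [mul_div_assoc]
  simp only [Finset.sum_div, Finset.mul_sum]
  refine Finset.sum_congr rfl fun a _ => Finset.sum_congr rfl fun b _ => by ring

lemma GFbig (d : ℕ) (hd : Odd d) (χ : ℤ → ℂ) (hper : ∀ a : ℤ, χ (a + d) = χ a)
    (E : ℕ → ℂ → ℂ) (hE : IsGenEuler d χ E)
    (u v w : ℕ) (hu0 : 0 < u) (hv0 : 0 < v) (hu : Odd u) (hv : Odd v) (y : ℂ) :
    (PowerSeries.mk fun n => Dsum d χ E u v w y n / n.factorial)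
      * ((expPS ((u : ℂ) * v * d) + 1) * ((expPS ((v : ℂ) * w * d) + 1)
          * (expPS ((u : ℂ) * w * d) + 1)))
    = 2 * expPS ((u : ℂ) * (v * (w * y)))
        * (rescale ((u : ℂ) * v) (altSum χ d) * (rescale ((v : ℂ) * w) (altSum χ d)
            * rescale ((u : ℂ) * w) (altSum χ d)))
        * (expPS ((u : ℂ) * (v * (w * d))) + 1) ^ 2 := by
  have hu' : (u : ℂ) ≠ 0 := Nat.cast_ne_zero.mpr hu0.ne'
  have hv' : (v : ℂ) ≠ 0 := Nat.cast_ne_zero.mpr hv0.ne'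
  have hX : ∀ a b : ℕ, ((u : ℂ) * v) *
      ((w : ℂ) * y + (w : ℂ) / (u : ℂ) * (a : ℂ) + (w : ℂ) / (v : ℂ) * (b : ℂ))
      = (u : ℂ) * (v * (w * y)) + (((v : ℂ) * w) * a + ((u : ℂ) * w) * b) := by
    intro a b; field_simp; ring
  have hstep : (PowerSeries.mk fun n => Dsum d χ E u v w y n / n.factorial)
      * (expPS ((u : ℂ) * v * d) + 1)
      = (2 * expPS ((u : ℂ) * (v * (w * y))) * rescale ((u : ℂ) * v) (altSum χ d))
        * ((∑ a ∈ range (u * d), ((-1 : ℂ) ^ a * χ (a : ℤ)) • expPS (((v : ℂ) * w) * a))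
          * (∑ b ∈ range (v * d), ((-1 : ℂ) ^ b * χ (b : ℤ)) • expPS (((u : ℂ) * w) * b))) := by
    rw [step1, Finset.sum_mul]
    rw [Finset.sum_mul_sum, Finset.mul_sum]
    refine Finset.sum_congr rfl fun a _ => ?_
    rw [Finset.sum_mul, Finset.mul_sum]
    refine Finset.sum_congr rfl fun b _ => ?_
    rw [smul_mul_assoc, resc_hE hE ((u : ℂ) * v) _, hX a b, expPS_add, expPS_add]
    simp only [smul_eq_C_mul, map_mul, map_pow, map_neg, map_one, pow_add]
    ring
  calc (PowerSeries.mk fun n => Dsum d χ E u v w y n / n.factorial)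
      * ((expPS ((u : ℂ) * v * d) + 1) * ((expPS ((v : ℂ) * w * d) + 1)
          * (expPS ((u : ℂ) * w * d) + 1)))
      = ((PowerSeries.mk fun n => Dsum d χ E u v w y n / n.factorial)
          * (expPS ((u : ℂ) * v * d) + 1)) * ((expPS ((v : ℂ) * w * d) + 1)
          * (expPS ((u : ℂ) * w * d) + 1)) := by ring
    _ = (2 * expPS ((u : ℂ) * (v * (w * y))) * rescale ((u : ℂ) * v) (altSum χ d))
        * (((∑ a ∈ range (u * d), ((-1 : ℂ) ^ a * χ (a : ℤ)) • expPS (((v : ℂ) * w) * a))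
            * (expPS (((v : ℂ) * w) * d) + 1))
          * ((∑ b ∈ range (v * d), ((-1 : ℂ) ^ b * χ (b : ℤ)) • expPS (((u : ℂ) * w) * b))
            * (expPS (((u : ℂ) * w) * d) + 1))) := by rw [hstep]; ring
    _ = (2 * expPS ((u : ℂ) * (v * (w * y))) * rescale ((u : ℂ) * v) (altSum χ d))
        * ((rescale ((v : ℂ) * w) (altSum χ d) * (expPS ((u : ℂ) * (((v : ℂ) * w) * d)) + 1))
          * (rescale ((u : ℂ) * w) (altSum χ d) * (expPS ((v : ℂ) * (((u : ℂ) * w) * d)) + 1))) := by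
        rw [Pmul d hd χ hper u hu, Pmul d hd χ hper v hv]
    _ = 2 * expPS ((u : ℂ) * (v * (w * y)))
        * (rescale ((u : ℂ) * v) (altSum χ d) * (rescale ((v : ℂ) * w) (altSum χ d)
            * rescale ((u : ℂ) * w) (altSum χ d)))
        * (expPS ((u : ℂ) * (v * (w * d))) + 1) ^ 2 := by
        rw [show (u : ℂ) * (((v : ℂ) * w) * d) = (u : ℂ) * (v * (w * d)) by ring,
            show (v : ℂ) * (((u : ℂ) * w) * d) = (u : ℂ) * (v * (w * d)) by ring]
        ring

lemma Bne (c : ℂ) : expPS c + 1 ≠ (0 : PowerSeries ℂ) := by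
  intro h
  have h2 := congrArg (PowerSeries.constantCoeff (R := ℂ)) h
  simp [constCoeff_expPS] at h2

lemma Dsum_cyc (d : ℕ) (hd : Odd d) (χ : ℤ → ℂ) (hper : ∀ a : ℤ, χ (a + d) = χ a)
    (E : ℕ → ℂ → ℂ) (hE : IsGenEuler d χ E)
    (u v w : ℕ) (hu0 : 0 < u) (hv0 : 0 < v) (hw0 : 0 < w)
    (hu : Odd u) (hv : Odd v) (hw : Odd w) (y : ℂ) (n : ℕ) :
    Dsum d χ E u v w y n = Dsum d χ E v w u y n := by
  have h1 := GFbig d hd χ hper E hE u v w hu0 hv0 hu hv y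
  have h2 := GFbig d hd χ hper E hE v w u hv0 hw0 hv hw y
  rw [show ((w : ℂ) * u) = (u : ℂ) * w from mul_comm _ _,
      show ((v : ℂ) * u) = (u : ℂ) * v from mul_comm _ _,
      show ((v : ℂ) * (w * (u * y))) = (u : ℂ) * (v * (w * y)) by ring,
      show ((v : ℂ) * (w * (u * d))) = (u : ℂ) * (v * (w * d)) by ring] at h2
  set B1 := expPS ((u : ℂ) * v * d) + 1 with hB1
  set B2 := expPS ((v : ℂ) * w * d) + 1 with hB2
  set B3 := expPS ((u : ℂ) * w * d) + 1 with hB3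
  have hC : B1 * (B2 * B3) ≠ 0 :=
    mul_ne_zero (Bne _) (mul_ne_zero (Bne _) (Bne _))
  have key : (PowerSeries.mk fun n => Dsum d χ E u v w y n / n.factorial) * (B1 * (B2 * B3))
      = (PowerSeries.mk fun n => Dsum d χ E v w u y n / n.factorial) * (B1 * (B2 * B3)) := by
    calc _ = _ := h1
      _ = 2 * expPS ((u : ℂ) * (v * (w * y)))
            * (rescale ((v : ℂ) * w) (altSum χ d) * (rescale ((u : ℂ) * w) (altSum χ d)
                * rescale ((u : ℂ) * v) (altSum χ d)))
            * (expPS ((u : ℂ) * (v * (w * d))) + 1) ^ 2 := by ring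
      _ = (PowerSeries.mk fun n => Dsum d χ E v w u y n / n.factorial) * (B2 * (B3 * B1)) :=
            h2.symm
      _ = _ := by ring
  have hps := mul_right_cancel₀ hC key
  have hco := congrArg (PowerSeries.coeff (R := ℂ) n) hps
  simp only [coeff_mk] at hco
  have hf : ((n.factorial : ℂ)) ≠ 0 := Nat.cast_ne_zero.mpr n.factorial_ne_zero
  field_simp at hco
  exact hco

end Aux

/-- Theorem 6: three cyclic symmetries for the double alternating sum of generalized
Euler polynomial values. -/
theorem stmt_5 (d : ℕ) (hd : Odd d) (hd0 : 0 < d) (χ : ℤ → ℂ)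
    (hper : ∀ a : ℤ, χ (a + d) = χ a)
    (hmul : ∀ a b : ℤ, χ (a * b) = χ a * χ b) (hone : χ 1 = 1)
    (hvan : ∀ a : ℤ, 1 < Int.gcd a d → χ a = 0)
    (E : ℕ → ℂ → ℂ) (hE : IsGenEuler d χ E)
    (w1 w2 w3 : ℕ) (hw1 : 0 < w1) (hw2 : 0 < w2) (hw3 : 0 < w3)
    (hw1o : Odd w1) (hw2o : Odd w2) (hw3o : Odd w3)
    (y1 : ℂ) (n : ℕ) :
    (((w1 : ℂ) * w2) ^ n * ∑ a ∈ range (w1 * d), ∑ b ∈ range (w2 * d),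
      (-1 : ℂ) ^ (a + b) * χ (a : ℤ) * χ (b : ℤ) *
        E n ((w3 : ℂ) * y1 + (w3 : ℂ) / (w1 : ℂ) * (a : ℂ) + (w3 : ℂ) / (w2 : ℂ) * (b : ℂ)))
    = (((w2 : ℂ) * w3) ^ n * ∑ a ∈ range (w2 * d), ∑ b ∈ range (w3 * d),
      (-1 : ℂ) ^ (a + b) * χ (a : ℤ) * χ (b : ℤ) *
        E n ((w1 : ℂ) * y1 + (w1 : ℂ) / (w2 : ℂ) * (a : ℂ) + (w1 : ℂ) / (w3 : ℂ) * (b : ℂ)))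
    ∧ (((w2 : ℂ) * w3) ^ n * ∑ a ∈ range (w2 * d), ∑ b ∈ range (w3 * d),
      (-1 : ℂ) ^ (a + b) * χ (a : ℤ) * χ (b : ℤ) *
        E n ((w1 : ℂ) * y1 + (w1 : ℂ) / (w2 : ℂ) * (a : ℂ) + (w1 : ℂ) / (w3 : ℂ) * (b : ℂ)))
    = ((w3 : ℂ) * w1) ^ n * ∑ a ∈ range (w3 * d), ∑ b ∈ range (w1 * d),
      (-1 : ℂ) ^ (a + b) * χ (a : ℤ) * χ (b : ℤ) *
        E n ((w2 : ℂ) * y1 + (w2 : ℂ) / (w3 : ℂ) * (a : ℂ) + (w2 : ℂ) / (w1 : ℂ) * (b : ℂ)) := by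
  refine ⟨?_, ?_⟩
  · exact Dsum_cyc d hd χ hper E hE w1 w2 w3 hw1 hw2 hw3 hw1o hw2o hw3o y1 n
  · exact Dsum_cyc d hd χ hper E hE w2 w3 w1 hw2 hw3 hw1 hw2o hw3o hw1o y1 n
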